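/- Let Γ be a finite link-regular simple graph with maximal clique size d. Using the geodesic automaton of RACG(Γ), for a clique σ let L_σ denote the set of words over VΓ accepted when the automaton is started in state σ. For 1 ≤ m ≤ d and n ≥ 0, let g_m(n) = Σ_{(v₁,…,v_m) ordered m-clique} |L_{{v₁,…,v_m}} ∩ (VΓ)ⁿ|, let g₀(n) = |L_∅ ∩ (VΓ)ⁿ|, and set g_{d+1}(n) = 0 for all n. Then: g₀(0) = 1 and g₀(n+1) = g₁(n) for all n ≥ 0; and for every 1 ≤ m ≤ d, g_m(0) = ℓ₀ℓ₁⋯ℓ_{m−1} and g_m(n+1) = Σ_{k=0}^{m} binom(m,k) N_{m,k} g_{k+1}(n) for all n ≥ 0. -/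

import Mathlib

set_option linter.unusedSectionVars false
set_option linter.unusedVariables false
set_option maxHeartbeats 1000000

open Finset Function

variable {V : Type*}

/-- The link of a finite set of vertices `σ`: vertices `v ∉ σ` with `σ ∪ {v}` a clique. -/
noncomputable def lk [Fintype V] (G : SimpleGraph V) (σ : Finset V) : Finset V :=
  Set.Finite.toFinset (Set.toFinite {v : V | v ∉ σ ∧ G.IsClique (insert v (σ : Set V))})

/-- Link-regularity of a simple graph: cliques of the same size have links of the same size. -/
def LinkRegularS [Fintype V] (G : SimpleGraph V) : Prop :=
  ∀ σ₁ σ₂ : Finset V, G.IsClique (σ₁ : Set V) → G.IsClique (σ₂ : Set V) →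
    σ₁.card = σ₂.card → (lk G σ₁).card = (lk G σ₂).card

/-- The numbers `N_{m,k}` of the paper, in terms of the link sizes `ℓ`. -/
def Nmk (ℓ : ℕ → ℤ) (m k : ℕ) : ℤ :=
  if k = m then 1
  else if k + 1 = m then ℓ (m - 1) - ℓ m - 1
  else (∏ j ∈ Finset.Ioo k m, ℓ j) *
    ∑ j ∈ Finset.Icc k m, ((m - k).choose (j - k) : ℤ) * (-1) ^ (j - k) * ℓ j

/-- The transition function of the geodesic automaton of a RACG: states are finite sets of
vertices (the reachable ones are the cliques), `none` is the reject state. -/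
def racgStep (G : SimpleGraph V) [DecidableEq V] [DecidableRel G.Adj] [Fintype V]
    (σ : Finset V) (v : V) : Option (Finset V) :=
  if v ∈ σ then none else some (insert v (G.neighborFinset v ∩ σ))

def racgRun (G : SimpleGraph V) [DecidableEq V] [DecidableRel G.Adj] [Fintype V] :
    Finset V → List V → Option (Finset V)
  | σ, [] => some σ
  | σ, v :: w =>
    match racgStep G σ v with
    | none => none
    | some τ => racgRun G τ w

/-- `|L_σ ∩ (VΓ)ⁿ|`: the number of words of length `n` accepted by the geodesic automaton
of `RACG(Γ)` started in state `σ`. -/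
noncomputable def aCount (G : SimpleGraph V) [Fintype V] [DecidableEq V] [DecidableRel G.Adj]
    (σ : Finset V) (n : ℕ) : ℕ :=
  Set.ncard {w : List V | w.length = n ∧ ∃ τ, racgRun G σ w = some τ ∧ G.IsClique (τ : Set V)}

/-- The ordered `m`-cliques of `G`, as injective tuples with clique range. -/
noncomputable def orderedCliques [Fintype V] (G : SimpleGraph V) (m : ℕ) :
    Finset (Fin m → V) :=
  Set.Finite.toFinset (Set.toFinite
    {t : Fin m → V | Function.Injective t ∧ G.IsClique (Set.range t)})

/-- `g_m(n)`: for `m = 0` the number of accepted words of length `n` from the empty clique;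
for `m ≥ 1` the sum over ordered `m`-cliques of the number of accepted words of length `n`
starting at the corresponding state.  (For `m` larger than the maximal clique size there are
no ordered `m`-cliques, so the value is `0`.) -/
noncomputable def gfun (G : SimpleGraph V) [Fintype V] [DecidableEq V] [DecidableRel G.Adj]
    (m n : ℕ) : ℤ :=
  if m = 0 then (aCount G ∅ n : ℤ)
  else ∑ t ∈ orderedCliques G m, (aCount G (Finset.image t Finset.univ) n : ℤ)


section
variable [Fintype V] [DecidableEq V] (G : SimpleGraph V) [DecidableRel G.Adj]

open scoped Classical in
noncomputable def wordsF : Finset V → ℕ → Finset (List V)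
  | σ, 0 => if G.IsClique (σ : Set V) then {([] : List V)} else ∅
  | σ, n+1 => (σᶜ).biUnion fun v =>
      ((wordsF (insert v (G.neighborFinset v ∩ σ)) n).image (List.cons v))

lemma coe_wordsF (n : ℕ) (σ : Finset V) : (wordsF G σ n : Set (List V))
    = {w : List V | w.length = n ∧ ∃ τ, racgRun G σ w = some τ ∧ G.IsClique (τ : Set V)} := by
  classical
  induction n generalizing σ with
  | zero =>
    ext w
    by_cases h : G.IsClique (σ : Set V)
    · simp only [wordsF, if_pos h, coe_singleton, Set.mem_singleton_iff, Set.mem_setOf_eq,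
        List.length_eq_zero_iff]
      constructor
      · rintro rfl; exact ⟨rfl, σ, rfl, h⟩
      · rintro ⟨rfl, _⟩; rfl
    · simp only [wordsF, if_neg h, coe_empty, Set.mem_empty_iff_false, false_iff,
        Set.mem_setOf_eq, not_and, List.length_eq_zero_iff]
      rintro rfl ⟨τ, hτ, hc⟩
      simp only [racgRun, Option.some.injEq] at hτ
      exact h (hτ ▸ hc)
  | succ n ih =>
    ext w
    simp only [wordsF, coe_biUnion, Set.mem_iUnion, coe_image, Set.mem_image, mem_coe,
      mem_compl, Set.mem_setOf_eq]
    constructor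
    · rintro ⟨v, hv, w', hw', rfl⟩
      rw [← Finset.mem_coe, ih] at hw'
      obtain ⟨hl, τ, hr, hc⟩ := hw'
      exact ⟨by simp [hl], τ, by simp [racgRun, racgStep, hv, hr], hc⟩
    · rintro ⟨hl, τ, hr, hc⟩
      match w with
      | [] => simp at hl
      | v :: w' =>
        by_cases hv : v ∈ σ
        · simp [racgRun, racgStep, hv] at hr
        · refine ⟨v, hv, w', ?_, rfl⟩
          rw [← Finset.mem_coe, ih]
          simp only [racgRun, racgStep, hv, if_neg] at hr
          exact ⟨by simpa using hl, τ, hr, hc⟩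

lemma aCount_eq (σ : Finset V) (n : ℕ) : aCount G σ n = (wordsF G σ n).card := by
  rw [aCount, ← coe_wordsF, Set.ncard_coe_finset]

lemma aCount_zero {σ : Finset V} (h : G.IsClique (σ : Set V)) : aCount G σ 0 = 1 := by
  classical
  rw [aCount_eq, wordsF, if_pos h, card_singleton]

lemma aCount_succ (σ : Finset V) (n : ℕ) :
    aCount G σ (n+1) = ∑ v ∈ σᶜ, aCount G (insert v (G.neighborFinset v ∩ σ)) n := by
  classical
  rw [aCount_eq, wordsF, card_biUnion]
  · refine Finset.sum_congr rfl fun v _ => ?_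
    rw [card_image_of_injective _ (List.cons_injective), aCount_eq]
  · intro x _ y _ hxy
    simp only [disjoint_left, mem_image]
    rintro a ⟨w, _, rfl⟩ ⟨w', _, h⟩
    injection h with h1 h2
    exact hxy h1.symm

end


section
variable [Fintype V] [DecidableEq V] {G : SimpleGraph V} [DecidableRel G.Adj]

lemma mem_lk {σ : Finset V} {v : V} :
    v ∈ lk G σ ↔ v ∉ σ ∧ G.IsClique (insert v (σ : Set V)) := by
  simp [lk]

lemma adj_of_mem_lk {σ : Finset V} {v u : V} (hv : v ∈ lk G σ) (hu : u ∈ σ) : G.Adj v u := by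
  rw [mem_lk] at hv
  exact hv.2 (Set.mem_insert _ _) (Set.mem_insert_of_mem _ hu) (fun h => hv.1 (h ▸ hu))

lemma lk_empty : lk G (∅ : Finset V) = Finset.univ := by
  ext v
  simp [mem_lk]

lemma mem_lk_of {σ : Finset V} (hσ : G.IsClique (σ : Set V)) {v : V} (h1 : v ∉ σ)
    (h2 : ∀ u ∈ σ, G.Adj v u) : v ∈ lk G σ := by
  rw [mem_lk]
  exact ⟨h1, hσ.insert fun b hb _ => h2 b hb⟩

lemma clique_insert_of_mem_lk {σ : Finset V} {v : V} (hv : v ∈ lk G σ) :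
    G.IsClique ((insert v σ : Finset V) : Set V) := by
  rw [Finset.coe_insert]
  exact (mem_lk.1 hv).2

lemma lk_insert {σ : Finset V} {v : V} (hσ : G.IsClique (σ : Set V)) (hv : v ∈ lk G σ) :
    lk G (insert v σ) = lk G σ ∩ G.neighborFinset v := by
  ext u
  constructor
  · intro h
    have h1 := (mem_lk.1 h).1
    have h2 : ∀ w ∈ insert v σ, G.Adj u w := fun w hw => adj_of_mem_lk h hw
    refine Finset.mem_inter.2 ⟨mem_lk_of hσ (fun hu => h1 (Finset.mem_insert_of_mem hu))
      (fun w hw => h2 w (Finset.mem_insert_of_mem hw)), ?_⟩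
    rw [SimpleGraph.mem_neighborFinset]
    exact (h2 v (Finset.mem_insert_self _ _)).symm
  · intro h
    obtain ⟨h1, h2⟩ := Finset.mem_inter.1 h
    rw [SimpleGraph.mem_neighborFinset] at h2
    apply mem_lk_of (clique_insert_of_mem_lk hv)
    · intro hu
      rcases Finset.mem_insert.1 hu with rfl | hu
      · exact G.irrefl h2
      · exact (mem_lk.1 h1).1 hu
    · intro w hw
      rcases Finset.mem_insert.1 hw with rfl | hw
      · exact h2.symm
      · exact adj_of_mem_lk h1 hw

lemma mem_oC {m : ℕ} {t : Fin m → V} :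
    t ∈ orderedCliques G m ↔ Function.Injective t ∧ G.IsClique (Set.range t) := by
  simp [orderedCliques]

lemma coe_img {m : ℕ} (t : Fin m → V) :
    ((Finset.image t Finset.univ : Finset V) : Set V) = Set.range t := by
  simp

lemma cons_mem_oC {m : ℕ} {s : Fin m → V} {v : V} :
    Fin.cons v s ∈ orderedCliques G (m + 1) ↔
      s ∈ orderedCliques G m ∧ v ∈ lk G (Finset.image s Finset.univ) := by
  rw [mem_oC, mem_oC, mem_lk, Fin.cons_injective_iff, Fin.range_cons, coe_img]
  constructor
  · intro ⟨⟨h1, h2⟩, h3⟩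
    exact ⟨⟨h2, h3.subset (Set.subset_insert _ _)⟩, by simpa using h1, h3⟩
  · intro ⟨⟨h1, h2⟩, h3, h4⟩
    exact ⟨⟨by simpa using h3, h1⟩, h4⟩

lemma sum_oC_succ {M : Type} [AddCommMonoid M] {m : ℕ} (F : (Fin (m + 1) → V) → M) :
    ∑ t ∈ orderedCliques G (m + 1), F t =
      ∑ s ∈ orderedCliques G m, ∑ v ∈ lk G (Finset.image s Finset.univ), F (Fin.cons v s) := by
  rw [← Finset.sum_sigma (orderedCliques G m) (fun s => lk G (Finset.image s Finset.univ))
    (fun x => F (Fin.cons x.2 x.1))]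
  refine Finset.sum_bij' (fun t _ => ⟨Fin.tail t, t 0⟩) (fun p _ => Fin.cons p.2 p.1)
    ?_ ?_ ?_ ?_ ?_
  · intro t ht
    rw [Finset.mem_sigma]
    rw [← Fin.cons_self_tail t] at ht
    exact ⟨(cons_mem_oC.1 ht).1, (cons_mem_oC.1 ht).2⟩
  · intro p hp
    rw [Finset.mem_sigma] at hp
    exact cons_mem_oC.2 ⟨hp.1, hp.2⟩
  · intro t _
    exact Fin.cons_self_tail t
  · intro p _
    simp
  · intro t _
    exact congrArg F (Fin.cons_self_tail t).symm

end

section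
variable [Fintype V] [DecidableEq V]

lemma card_fiber_eq_factorial {p : ℕ} {σ : Finset V} (h : σ.card = p) :
    (Finset.univ.filter
      (fun t : Fin p → V => Function.Injective t ∧ Finset.image t Finset.univ = σ)).card
      = p.factorial := by
  classical
  have hcard : Fintype.card {x // x ∈ σ} = p := by simp [h]
  let Φ : (Fin p ≃ {x // x ∈ σ}) → (Fin p → V) := fun e i => (e i : V)
  have hinj : Function.Injective Φ := fun e1 e2 he =>
    Equiv.ext fun i => Subtype.ext (congrFun he i)
  have himg : Finset.univ.image Φ = Finset.univ.filter
      (fun t : Fin p → V => Function.Injective t ∧ Finset.image t Finset.univ = σ) := by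
    ext t
    simp only [Finset.mem_image, Finset.mem_univ, true_and, Finset.mem_filter]
    constructor
    · rintro ⟨e, rfl⟩
      refine ⟨Subtype.val_injective.comp e.injective, ?_⟩
      ext x
      simp only [Finset.mem_image, Finset.mem_univ, true_and]
      constructor
      · rintro ⟨i, rfl⟩
        exact (e i).2
      · intro hx
        exact ⟨e.symm ⟨x, hx⟩, by simp [Φ]⟩
    · rintro ⟨h1, h2⟩
      have hmem : ∀ i, t i ∈ σ := fun i => h2 ▸ Finset.mem_image_of_mem t (Finset.mem_univ i)
      let t' : Fin p → {x // x ∈ σ} := fun i => ⟨t i, hmem i⟩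
      have hbij : Function.Bijective t' := by
        rw [Fintype.bijective_iff_injective_and_card]
        exact ⟨fun a b hab => h1 (congrArg Subtype.val hab), by simp [hcard]⟩
      exact ⟨Equiv.ofBijective t' hbij, rfl⟩
  rw [← himg, Finset.card_image_of_injective _ hinj, Finset.card_univ, Fintype.card_equiv
    ((finCongr h.symm).trans σ.equivFin.symm), Fintype.card_fin]

lemma sum_tuple_eq_factorial_mul (p : ℕ) (Q : Finset V → Prop)
    (S : Finset (Fin p → V)) (T : Finset (Finset V))
    (hS : ∀ t, t ∈ S ↔ Function.Injective t ∧ Q (Finset.image t Finset.univ))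
    (hT : ∀ σ, σ ∈ T ↔ σ.card = p ∧ Q σ) (F : Finset V → ℤ) :
    ∑ t ∈ S, F (Finset.image t Finset.univ) = (p.factorial : ℤ) * ∑ σ ∈ T, F σ := by
  classical
  rw [Finset.sum_comp F (fun t => Finset.image t Finset.univ)]
  have himg : S.image (fun t => Finset.image t Finset.univ) = T := by
    ext σ
    simp only [Finset.mem_image]
    rw [hT]
    constructor
    · rintro ⟨t, ht, rfl⟩
      obtain ⟨ht1, ht2⟩ := (hS t).1 ht
      exact ⟨by rw [Finset.card_image_of_injective _ ht1, Finset.card_univ, Fintype.card_fin],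
        ht2⟩
    · rintro ⟨h1, h2⟩
      have hpos : 0 < (Finset.univ.filter
          (fun t : Fin p → V => Function.Injective t ∧ Finset.image t Finset.univ = σ)).card := by
        rw [card_fiber_eq_factorial h1]
        exact Nat.factorial_pos p
      obtain ⟨t, ht⟩ := Finset.card_pos.1 hpos
      rw [Finset.mem_filter] at ht
      exact ⟨t, (hS t).2 ⟨ht.2.1, ht.2.2 ▸ h2⟩, ht.2.2⟩
  rw [himg, Finset.mul_sum]
  refine Finset.sum_congr rfl fun σ hσ => ?_
  obtain ⟨h1, h2⟩ := (hT σ).1 hσ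
  have hfe : S.filter (fun t => Finset.image t Finset.univ = σ) =
      Finset.univ.filter
        (fun t : Fin p → V => Function.Injective t ∧ Finset.image t Finset.univ = σ) := by
    ext t
    simp only [Finset.mem_filter, Finset.mem_univ, true_and]
    rw [hS]
    constructor
    · rintro ⟨⟨a, b⟩, c⟩
      exact ⟨a, c⟩
    · rintro ⟨a, c⟩
      exact ⟨⟨a, c ▸ h2⟩, c⟩
  rw [hfe, card_fiber_eq_factorial h1, nsmul_eq_mul]

end

noncomputable def extT [Fintype V] (G : SimpleGraph V) (π : Finset V) (p : ℕ) :
    Finset (Fin p → V) :=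
  Set.Finite.toFinset (Set.toFinite {t : Fin p → V | Function.Injective t ∧ (∀ i, t i ∉ π) ∧
    G.IsClique ((π : Set V) ∪ Set.range t)})

section
variable [Fintype V] [DecidableEq V] {G : SimpleGraph V} [DecidableRel G.Adj]

lemma mem_extT {π : Finset V} {p : ℕ} {t : Fin p → V} :
    t ∈ extT G π p ↔ Function.Injective t ∧ (∀ i, t i ∉ π) ∧
      G.IsClique ((π : Set V) ∪ Set.range t) := by
  simp [extT]

lemma range_insertNth' {p : ℕ} (j : Fin (p + 1)) (v : V) (s : Fin p → V) :
    Set.range (Fin.insertNth j v s) = insert v (Set.range s) := by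
  ext x
  constructor
  · rintro ⟨i, rfl⟩
    rcases eq_or_ne i j with rfl | hi
    · simp
    · obtain ⟨k, rfl⟩ := Fin.exists_succAbove_eq hi
      rw [Fin.insertNth_apply_succAbove]
      exact Set.mem_insert_of_mem _ ⟨k, rfl⟩
  · rintro (rfl | ⟨k, rfl⟩)
    · refine ⟨j, ?_⟩
      simp
    · exact ⟨j.succAbove k, Fin.insertNth_apply_succAbove (α := fun _ => V) j v s k⟩

lemma insertNth_mem_extT {π : Finset V} {p : ℕ} (j : Fin (p + 1)) {v : V} {s : Fin p → V} :
    Fin.insertNth j v s ∈ extT G π (p + 1) ↔ v ∈ lk G π ∧ s ∈ extT G (insert v π) p := by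
  have hsa : ∀ k, Fin.insertNth (α := fun _ => V) j v s (j.succAbove k) = s k := fun k => by simp
  have hj : Fin.insertNth (α := fun _ => V) j v s j = v := by simp
  have hru : ((π : Set V) ∪ Set.range (Fin.insertNth j v s)) =
      (((insert v π : Finset V) : Set V) ∪ Set.range s) := by
    rw [range_insertNth', Finset.coe_insert, Set.union_insert, Set.insert_union]
  constructor
  · intro ht
    obtain ⟨h1, h2, h3⟩ := mem_extT.1 ht
    have hsinj : Function.Injective s := by
      intro a b hab
      apply Fin.succAbove_right_injective (p := j)
      apply h1
      rw [hsa, hsa, hab]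
    have hv : v ∈ lk G π := by
      apply mem_lk.2
      refine ⟨hj ▸ h2 j, h3.subset ?_⟩
      intro x hx
      rcases hx with rfl | hx
      · exact Or.inr ⟨j, hj⟩
      · exact Or.inl hx
    refine ⟨hv, mem_extT.2 ⟨hsinj, fun k => ?_, ?_⟩⟩
    · rw [Finset.mem_insert]
      push_neg
      constructor
      · intro he
        exact Fin.succAbove_ne j k (h1 (by rw [hsa, hj, he]))
      · exact hsa k ▸ h2 (j.succAbove k)
    · rw [← hru]
      exact h3
  · rintro ⟨hv, hs⟩
    obtain ⟨h1, h2, h3⟩ := mem_extT.1 hs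
    have hne : ∀ k, s k ≠ v := fun k he => (h2 k) (he ▸ Finset.mem_insert_self v π)
    refine mem_extT.2 ⟨?_, ?_, ?_⟩
    · intro a b hab
      rcases eq_or_ne a j with rfl | ha
      · rcases eq_or_ne b a with rfl | hb
        · rfl
        · obtain ⟨k, rfl⟩ := Fin.exists_succAbove_eq hb
          rw [hj, hsa] at hab
          exact absurd hab.symm (hne k)
      · obtain ⟨k, rfl⟩ := Fin.exists_succAbove_eq ha
        rcases eq_or_ne b j with rfl | hb
        · rw [hj, hsa] at hab
          exact absurd hab (hne k)
        · obtain ⟨k', rfl⟩ := Fin.exists_succAbove_eq hb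
          rw [hsa, hsa] at hab
          exact congrArg _ (h1 hab)
    · intro i
      rcases eq_or_ne i j with rfl | hi
      · rw [hj]
        exact (mem_lk.1 hv).1
      · obtain ⟨k, rfl⟩ := Fin.exists_succAbove_eq hi
        rw [hsa]
        exact fun hm => h2 k (Finset.mem_insert_of_mem hm)
    · rw [hru]
      exact h3

lemma sum_extT_peel {M : Type} [AddCommMonoid M] {π : Finset V} {p : ℕ} (j : Fin (p + 1))
    (F : (Fin (p + 1) → V) → M) :
    ∑ t ∈ extT G π (p + 1), F t =
      ∑ v ∈ lk G π, ∑ s ∈ extT G (insert v π) p, F (Fin.insertNth j v s) := by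
  rw [← Finset.sum_sigma (lk G π) (fun v => extT G (insert v π) p)
    (fun x => F (Fin.insertNth j x.1 x.2))]
  refine Finset.sum_bij' (fun t _ => ⟨t j, j.removeNth t⟩)
    (fun x _ => Fin.insertNth j x.1 x.2) ?_ ?_ ?_ ?_ ?_
  · intro t ht
    rw [Finset.mem_sigma]
    rw [← Fin.insertNth_self_removeNth j t] at ht
    exact ⟨(insertNth_mem_extT j |>.1 ht).1, (insertNth_mem_extT j |>.1 ht).2⟩
  · intro x hx
    rw [Finset.mem_sigma] at hx
    exact (insertNth_mem_extT j).2 ⟨hx.1, hx.2⟩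
  · intro t _
    exact Fin.insertNth_self_removeNth j t
  · intro x _
    refine Sigma.ext ?_ ?_
    · simp [Fin.insertNth_apply_same]
    · simp [Fin.removeNth, Fin.insertNth_apply_succAbove]
  · intro t _
    exact congrArg F (Fin.insertNth_self_removeNth j t).symm

end

section
variable [Fintype V] [DecidableEq V] {G : SimpleGraph V} [DecidableRel G.Adj]
variable {d : ℕ} {ℓ : ℕ → ℤ}

lemma card_lk_eq (hℓ0 : ℓ 0 = Fintype.card V)
    (hℓ : ∀ k, 1 ≤ k → k ≤ d → ∀ σ : Finset V, G.IsClique (σ : Set V) → σ.card = k →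
      ℓ k = ((lk G σ).card : ℤ))
    {σ : Finset V} (hσ : G.IsClique (σ : Set V)) (hsd : σ.card ≤ d) :
    ((lk G σ).card : ℤ) = ℓ σ.card := by
  rcases Nat.eq_zero_or_pos σ.card with h | h
  · rw [Finset.card_eq_zero] at h
    subst h
    simp [lk_empty, hℓ0]
  · exact (hℓ _ h hsd σ hσ rfl).symm

lemma card_extT (hℓ0 : ℓ 0 = Fintype.card V)
    (hℓ : ∀ k, 1 ≤ k → k ≤ d → ∀ σ : Finset V, G.IsClique (σ : Set V) → σ.card = k →
      ℓ k = ((lk G σ).card : ℤ)) :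
    ∀ (p : ℕ) (π : Finset V), G.IsClique (π : Set V) → π.card + p ≤ d →
    ((extT G π p).card : ℤ) = ∏ j ∈ Finset.Ico π.card (π.card + p), ℓ j := by
  intro p
  induction p with
  | zero =>
    intro π hπ _
    have : extT G π 0 = Finset.univ := by
      ext t
      simp only [mem_extT, Finset.mem_univ, iff_true]
      refine ⟨Function.injective_of_subsingleton t, fun i => i.elim0, ?_⟩
      rw [Set.range_eq_empty t, Set.union_empty]
      exact hπ
    rw [this, Finset.card_univ]
    simp
  | succ p ih =>
    intro π hπ hpd
    have hsum : ((extT G π (p+1)).card : ℤ) = ∑ t ∈ extT G π (p+1), (1 : ℤ) := by simp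
    rw [hsum, sum_extT_peel 0 (fun _ => (1 : ℤ))]
    have : ∀ v ∈ lk G π, ∑ _s ∈ extT G (insert v π) p, (1 : ℤ)
        = ∏ j ∈ Finset.Ico (π.card + 1) (π.card + (p + 1)), ℓ j := by
      intro v hv
      have hvnot : v ∉ π := (mem_lk.1 hv).1
      have hcard : (insert v π).card = π.card + 1 := Finset.card_insert_of_notMem hvnot
      have := ih (insert v π) (clique_insert_of_mem_lk hv) (by omega)
      rw [hcard] at this
      rw [show π.card + (p + 1) = π.card + 1 + p from by omega, ← this]
      simp
    rw [Finset.sum_congr rfl this, Finset.sum_const, nsmul_eq_mul,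
      card_lk_eq hℓ0 hℓ hπ (by omega),
      Finset.prod_eq_prod_Ico_succ_bot (by omega : π.card < π.card + (p + 1))]

lemma lk_filter_closed {π : Finset V} {u : V} (hπ : G.IsClique (π : Set V)) (hu : u ∈ lk G π) :
    (lk G π).filter (fun x => x = u ∨ G.Adj u x) = insert u (lk G (insert u π)) := by
  rw [lk_insert hπ hu]
  ext x
  simp only [Finset.mem_filter, Finset.mem_insert, Finset.mem_inter,
    SimpleGraph.mem_neighborFinset]
  constructor
  · rintro ⟨h1, rfl | h2⟩
    · exact Or.inl rfl
    · exact Or.inr ⟨h1, h2⟩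
  · rintro (rfl | ⟨h1, h2⟩)
    · exact ⟨hu, Or.inl rfl⟩
    · exact ⟨h1, Or.inr h2⟩

lemma filter_succAbove_card {p : ℕ} (j : Fin (p + 1)) (c : Fin (p + 1) → Bool)
    (hcj : c j = true) :
    (Finset.univ.filter (fun x => c x = true)).card
      = (Finset.univ.filter (fun k => c (j.succAbove k) = true)).card + 1 := by
  have : Finset.univ.filter (fun x => c x = true)
      = insert j ((Finset.univ.filter (fun k => c (j.succAbove k) = true)).image j.succAbove) := by
    ext x
    simp only [Finset.mem_filter, Finset.mem_univ, true_and, Finset.mem_insert, Finset.mem_image]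
    constructor
    · intro hx
      rcases eq_or_ne x j with rfl | hxj
      · exact Or.inl rfl
      · obtain ⟨k, rfl⟩ := Fin.exists_succAbove_eq hxj
        exact Or.inr ⟨k, hx, rfl⟩
    · rintro (rfl | ⟨k, hk, rfl⟩)
      · exact hcj
      · exact hk
  rw [this, Finset.card_insert_of_notMem, Finset.card_image_of_injective _
    Fin.succAbove_right_injective]
  simp only [Finset.mem_image]
  rintro ⟨k, _, hk⟩
  exact Fin.succAbove_ne j k hk

lemma mem_lk_comm {π : Finset V} {u v : V} (hu : u ∈ lk G π) (hv : v ∈ lk G (insert u π)) :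
    u ∈ lk G (insert v π) := by
  have hadj : G.Adj v u := adj_of_mem_lk hv (Finset.mem_insert_self u π)
  have hvπ : v ∉ π := fun h => (mem_lk.1 hv).1 (Finset.mem_insert_of_mem h)
  apply mem_lk_of (G := G) (σ := insert v π)
  · rw [Finset.coe_insert]
    have h2 := (mem_lk.1 hv).2
    rw [Finset.coe_insert, Set.insert_comm] at h2
    exact h2.subset (Set.subset_insert _ _)
  · rw [Finset.mem_insert]
    push_neg
    exact ⟨hadj.ne', (mem_lk.1 hu).1⟩
  · intro w hw
    rcases Finset.mem_insert.1 hw with rfl | hw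
    · exact hadj.symm
    · exact adj_of_mem_lk hu hw

end

open scoped Classical in
noncomputable def countH [Fintype V] [DecidableEq V] (G : SimpleGraph V) [DecidableRel G.Adj]
    (π : Finset V) (u : V) (p : ℕ) (c : Fin p → Bool) : ℤ :=
  ∑ t ∈ extT G π p, if ∀ i, c i = true → (t i = u ∨ G.Adj u (t i)) then 1 else 0

section
variable [Fintype V] [DecidableEq V] {G : SimpleGraph V} [DecidableRel G.Adj]
variable {d : ℕ} {ℓ : ℕ → ℤ}

lemma countH_trivial {π : Finset V} {u : V} {p : ℕ} {c : Fin p → Bool}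
    (h : ∀ t ∈ extT G π p, ∀ i, c i = true → (t i = u ∨ G.Adj u (t i))) :
    countH G π u p c = ((extT G π p).card : ℤ) := by
  rw [countH]
  rw [Finset.sum_congr rfl (fun t ht => if_pos (h t ht))]
  simp

lemma countH_eq (hℓ0 : ℓ 0 = Fintype.card V)
    (hℓ : ∀ k, 1 ≤ k → k ≤ d → ∀ σ : Finset V, G.IsClique (σ : Set V) → σ.card = k →
      ℓ k = ((lk G σ).card : ℤ)) :
    ∀ (p : ℕ) (π : Finset V) (c : Fin p → Bool) (u : V), G.IsClique (π : Set V) →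
      u ∈ lk G π → π.card + p ≤ d → 1 ≤ p →
    countH G π u p c = (ℓ (π.card + (Finset.univ.filter (fun x => c x = true)).card)
      + ((Finset.univ.filter (fun x => c x = true)).card : ℤ))
      * ∏ j ∈ Finset.Ico (π.card + 1) (π.card + p), ℓ j := by
  classical
  intro p
  induction p with
  | zero => intro _ _ _ _ _ _ h; omega
  | succ p ih =>
    intro π c u hπ hu hpd _
    by_cases hcex : ∃ j, c j = true
    · obtain ⟨j, hcj⟩ := hcex
      have hcond : ∀ (v : V) (s' : Fin p → V),
          ((∀ i, c i = true → (Fin.insertNth (α := fun _ => V) j v s' i = u ∨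
              G.Adj u (Fin.insertNth (α := fun _ => V) j v s' i)))
            ↔ ((v = u ∨ G.Adj u v) ∧
              ∀ k, c (j.succAbove k) = true → (s' k = u ∨ G.Adj u (s' k)))) := by
        intro v s'
        constructor
        · intro h
          refine ⟨by simpa using h j hcj, fun k hk => by simpa using h (j.succAbove k) hk⟩
        · rintro ⟨h1, h2⟩ i hi
          rcases eq_or_ne i j with rfl | hij
          · simpa using h1
          · obtain ⟨k, rfl⟩ := Fin.exists_succAbove_eq hij
            simpa using h2 k hi
      have step1 : countH G π u (p + 1) c
          = ∑ v ∈ lk G π, if (v = u ∨ G.Adj u v)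
              then countH G (insert v π) u p (fun k => c (j.succAbove k)) else 0 := by
        rw [countH, sum_extT_peel j]
        refine Finset.sum_congr rfl fun v hv => ?_
        split
        case isTrue h1 =>
          rw [countH]
          refine Finset.sum_congr rfl fun s' hs' => ?_
          refine if_congr ?_ rfl rfl
          rw [hcond]
          simp [h1]
        case isFalse h1 =>
          refine Finset.sum_eq_zero fun s' hs' => ?_
          rw [if_neg]
          rw [hcond]
          tauto
      have hunotin : u ∉ lk G (insert u π) := by
        intro h
        exact (mem_lk.1 h).1 (Finset.mem_insert_self u π)
      have hucl : G.IsClique ((insert u π : Finset V) : Set V) := clique_insert_of_mem_lk hu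
      have hucard : (insert u π).card = π.card + 1 :=
        Finset.card_insert_of_notMem (mem_lk.1 hu).1
      rw [step1, ← Finset.sum_filter, lk_filter_closed hπ hu, Finset.sum_insert hunotin]
      have term1 : countH G (insert u π) u p (fun k => c (j.succAbove k))
          = ((extT G (insert u π) p).card : ℤ) := by
        refine countH_trivial fun s' hs' k hk => ?_
        obtain ⟨h1, h2, h3⟩ := mem_extT.1 hs'
        refine Or.inr (h3 (Or.inl ?_) (Or.inr ⟨k, rfl⟩) ?_)
        · exact Finset.mem_coe.2 (Finset.mem_insert_self u π)
        · intro he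
          exact h2 k (he ▸ Finset.mem_insert_self u π)
      have hext1 : ((extT G (insert u π) p).card : ℤ)
          = ∏ j ∈ Finset.Ico (π.card + 1) (π.card + 1 + p), ℓ j := by
        rw [card_extT hℓ0 hℓ p (insert u π) hucl (by omega), hucard]
      have hlkcard : ((lk G (insert u π)).card : ℤ) = ℓ (π.card + 1) := by
        rw [card_lk_eq hℓ0 hℓ hucl (by omega), hucard]
      have hfc := filter_succAbove_card j c hcj
      set i' := (Finset.univ.filter (fun k => c (j.succAbove k) = true)).card with hi'
      rcases Nat.eq_zero_or_pos p with rfl | hp1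
      · -- p = 0 : length-one tuples
        have term2 : ∀ v ∈ lk G (insert u π),
            countH G (insert v π) u 0 (fun k => c (j.succAbove k)) = 1 := by
          intro v hv
          rw [countH_trivial (fun _ _ k => k.elim0)]
          have hv' : v ∈ lk G π := by
            rw [lk_insert hπ hu] at hv
            exact (Finset.mem_inter.1 hv).1
          rw [card_extT hℓ0 hℓ 0 (insert v π) (clique_insert_of_mem_lk hv') (by
            rw [Finset.card_insert_of_notMem (mem_lk.1 hv').1]; omega)]
          simp
        rw [Finset.sum_congr rfl term2, Finset.sum_const, nsmul_eq_mul, mul_one, term1, hext1,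
          hlkcard]
        have : i' = 0 := by simp [hi']
        rw [this] at hfc
        rw [hfc]
        simp
        ring
      · have term2 : ∀ v ∈ lk G (insert u π),
            countH G (insert v π) u p (fun k => c (j.succAbove k))
            = (ℓ (π.card + 1 + i') + (i' : ℤ))
              * ∏ j ∈ Finset.Ico (π.card + 2) (π.card + 1 + p), ℓ j := by
          intro v hv
          have hv' : v ∈ lk G π := by
            rw [lk_insert hπ hu] at hv
            exact (Finset.mem_inter.1 hv).1
          have hvcard : (insert v π).card = π.card + 1 :=
            Finset.card_insert_of_notMem (mem_lk.1 hv').1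
          rw [ih (insert v π) (fun k => c (j.succAbove k)) u (clique_insert_of_mem_lk hv')
            (mem_lk_comm hu hv) (by omega) hp1, hvcard]
        rw [Finset.sum_congr rfl term2, Finset.sum_const, nsmul_eq_mul, term1, hext1, hlkcard]
        have hsplit : ∏ j ∈ Finset.Ico (π.card + 1) (π.card + 1 + p), ℓ j
            = ℓ (π.card + 1) * ∏ j ∈ Finset.Ico (π.card + 2) (π.card + 1 + p), ℓ j := by
          rw [Finset.prod_eq_prod_Ico_succ_bot (by omega : π.card + 1 < π.card + 1 + p)]
        have h1 : π.card + (p + 1) = π.card + 1 + p := by omega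
        have h2 : (Finset.univ.filter (fun x => c x = true)).card = i' + 1 := hfc
        rw [h1, h2, hsplit]
        have h3 : π.card + (i' + 1) = π.card + 1 + i' := by omega
        rw [h3]
        push_cast
        ring
    · push_neg at hcex
      have : countH G π u (p + 1) c = ((extT G π (p + 1)).card : ℤ) := by
        refine countH_trivial fun t ht k hk => ?_
        exact absurd hk (by simp [hcex k])
      rw [this, card_extT hℓ0 hℓ (p + 1) π hπ hpd]
      have : (Finset.univ.filter (fun x => c x = true)).card = 0 := by
        simp [hcex]
      rw [this, Finset.prod_eq_prod_Ico_succ_bot (by omega : π.card < π.card + (p + 1))]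
      push_cast
      ring
end

open scoped Classical in
noncomputable def countAvoid [Fintype V] [DecidableEq V] (G : SimpleGraph V) [DecidableRel G.Adj]
    (π : Finset V) (u : V) (p : ℕ) : ℤ :=
  ∑ t ∈ extT G π p, if (∀ i, ¬(t i = u ∨ G.Adj u (t i))) then 1 else 0

section
variable [Fintype V] [DecidableEq V] {G : SimpleGraph V} [DecidableRel G.Adj]
variable {d : ℕ} {ℓ : ℕ → ℤ}

lemma countAvoid_zero {π : Finset V} {u : V} (hπ : G.IsClique (π : Set V)) :
    countAvoid G π u 0 = 1 := by
  classical
  have : extT G π 0 = Finset.univ := by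
    ext t
    simp only [mem_extT, Finset.mem_univ, iff_true]
    refine ⟨Function.injective_of_subsingleton t, fun i => i.elim0, ?_⟩
    rw [Set.range_eq_empty t, Set.union_empty]
    exact hπ
  rw [countAvoid, this]
  rw [Finset.sum_congr rfl (fun t _ => if_pos (fun i => i.elim0))]
  have : Fintype.card (Fin 0 → V) = 1 := by simp
  simp [Finset.card_univ, this]

lemma countAvoid_eq (hℓ0 : ℓ 0 = Fintype.card V)
    (hℓ : ∀ k, 1 ≤ k → k ≤ d → ∀ σ : Finset V, G.IsClique (σ : Set V) → σ.card = k →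
      ℓ k = ((lk G σ).card : ℤ))
    (p : ℕ) (π : Finset V) (u : V) (hπ : G.IsClique (π : Set V)) (hu : u ∈ lk G π)
    (hpd : π.card + p ≤ d) (hp : 1 ≤ p) :
    countAvoid G π u p = (∏ j ∈ Finset.Ico (π.card + 1) (π.card + p), ℓ j)
      * ∑ i ∈ Finset.range (p + 1), (p.choose i : ℤ) * (-1) ^ i * (ℓ (π.card + i) + i) := by
  classical
  have hpt : ∀ (t : Fin p → V), (if (∀ i, ¬(t i = u ∨ G.Adj u (t i))) then (1 : ℤ) else 0)
      = ∏ i : Fin p, ((- if (t i = u ∨ G.Adj u (t i)) then (1 : ℤ) else 0) + 1) := by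
    intro t
    by_cases h : ∀ i, ¬(t i = u ∨ G.Adj u (t i))
    · rw [if_pos h]
      have h2 : ∀ i ∈ (Finset.univ : Finset (Fin p)),
          ((-if t i = u ∨ G.Adj u (t i) then (1 : ℤ) else 0) + 1) = 1 := fun i _ => by
        rw [if_neg (h i)]
        ring
      rw [Finset.prod_congr rfl h2, Finset.prod_const_one]
    · rw [if_neg h]
      push_neg at h
      obtain ⟨i, hi⟩ := h
      exact (Finset.prod_eq_zero (Finset.mem_univ i) (by rw [if_pos hi]; ring)).symm
  have step1 : countAvoid G π u p
      = ∑ I ∈ (Finset.univ : Finset (Fin p)).powerset,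
          (-1 : ℤ) ^ I.card * countH G π u p (fun i => decide (i ∈ I)) := by
    rw [countAvoid, Finset.sum_congr rfl (fun t _ => hpt t)]
    have hexp : ∀ t : Fin p → V,
        (∏ i : Fin p, ((- if (t i = u ∨ G.Adj u (t i)) then (1 : ℤ) else 0) + 1))
        = ∑ I ∈ (Finset.univ : Finset (Fin p)).powerset,
            (-1 : ℤ) ^ I.card * ∏ i ∈ I, (if (t i = u ∨ G.Adj u (t i)) then (1 : ℤ) else 0) := by
      intro t
      rw [Finset.prod_add]
      refine Finset.sum_congr rfl fun I _ => ?_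
      rw [Finset.prod_const_one, mul_one]
      rw [Finset.prod_congr rfl (fun i _ =>
        (neg_eq_neg_one_mul (if (t i = u ∨ G.Adj u (t i)) then (1 : ℤ) else 0) : _)),
        Finset.prod_mul_distrib, Finset.prod_const]
    rw [Finset.sum_congr rfl (fun t _ => hexp t), Finset.sum_comm]
    refine Finset.sum_congr rfl fun I _ => ?_
    rw [← Finset.mul_sum]
    congr 1
    rw [countH]
    refine Finset.sum_congr rfl fun t _ => ?_
    rw [Finset.prod_boole]
    by_cases hQ : ∀ i ∈ I, (t i = u ∨ G.Adj u (t i))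
    · rw [if_pos hQ, if_pos (fun i (hi : decide (i ∈ I) = true) => hQ i (by simpa using hi))]
    · rw [if_neg hQ, if_neg (fun h => hQ (fun i hi => h i (by simpa using hi)))]
  rw [step1]
  have hvalI : ∀ I ∈ (Finset.univ : Finset (Fin p)).powerset,
      (-1 : ℤ) ^ I.card * countH G π u p (fun i => decide (i ∈ I))
      = (-1 : ℤ) ^ I.card * ((ℓ (π.card + I.card) + (I.card : ℤ))
        * ∏ j ∈ Finset.Ico (π.card + 1) (π.card + p), ℓ j) := by
    intro I _
    have hfI : (Finset.univ.filter (fun x : Fin p => decide (x ∈ I) = true)) = I := by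
      ext x
      simp
    rw [countH_eq hℓ0 hℓ p π (fun i => decide (i ∈ I)) u hπ hu hpd hp, hfI]
  rw [Finset.sum_congr rfl hvalI, Finset.sum_powerset]
  have hval2 : ∀ i ∈ Finset.range ((Finset.univ : Finset (Fin p)).card + 1),
      (∑ I ∈ Finset.powersetCard i (Finset.univ : Finset (Fin p)),
        (-1 : ℤ) ^ I.card * ((ℓ (π.card + I.card) + (I.card : ℤ))
          * ∏ j ∈ Finset.Ico (π.card + 1) (π.card + p), ℓ j))
      = (p.choose i : ℤ) * ((-1 : ℤ) ^ i * ((ℓ (π.card + i) + (i : ℤ))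
          * ∏ j ∈ Finset.Ico (π.card + 1) (π.card + p), ℓ j)) := by
    intro i _
    rw [Finset.sum_congr rfl (fun I hI => by
      rw [(Finset.mem_powersetCard.1 hI).2]), Finset.sum_const, Finset.card_powersetCard,
      Finset.card_univ, Fintype.card_fin, nsmul_eq_mul]
  rw [Finset.sum_congr rfl hval2, Finset.card_univ, Fintype.card_fin, Finset.mul_sum]
  refine Finset.sum_congr rfl fun i _ => ?_
  ring

end

lemma alt_weighted_zero {p : ℕ} (hp : 2 ≤ p) :
    ∑ i ∈ Finset.range (p + 1), (p.choose i : ℤ) * (-1) ^ i * i = 0 := by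
  rw [Finset.sum_range_succ']
  simp only [Nat.cast_zero, mul_zero, add_zero]
  have key : ∀ i : ℕ, (p.choose (i + 1) : ℤ) * (-1) ^ (i + 1) * ((i : ℤ) + 1)
      = (-1) * ((p : ℤ) * ((-1) ^ i * ((p - 1).choose i : ℤ))) := by
    intro i
    have hnat : p * ((p - 1).choose i) = p.choose (i + 1) * (i + 1) := by
      have h3 := Nat.add_one_mul_choose_eq (p - 1) i
      have hps : p - 1 + 1 = p := by omega
      rw [hps] at h3
      simpa [Nat.succ_eq_add_one] using h3
    have hc : (p.choose (i + 1) : ℤ) * ((i : ℤ) + 1) = (p : ℤ) * ((p - 1).choose i : ℤ) := by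
      exact_mod_cast hnat.symm
    calc (p.choose (i + 1) : ℤ) * (-1) ^ (i + 1) * ((i : ℤ) + 1)
        = ((p.choose (i + 1) : ℤ) * ((i : ℤ) + 1)) * (-1) ^ (i + 1) := by ring
      _ = ((p : ℤ) * ((p - 1).choose i : ℤ)) * (-1) ^ (i + 1) := by rw [hc]
      _ = (-1) * ((p : ℤ) * ((-1) ^ i * ((p - 1).choose i : ℤ))) := by ring
  have h2 : ∑ i ∈ Finset.range p, (-1 : ℤ) ^ i * ((p - 1).choose i : ℤ) = 0 := by
    have := Int.alternating_sum_range_choose (n := p - 1)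
    rw [show p - 1 + 1 = p from by omega] at this
    rw [this, if_neg (by omega)]
  calc ∑ i ∈ Finset.range p, (p.choose (i + 1) : ℤ) * (-1) ^ (i + 1) * (↑(i + 1))
      = ∑ i ∈ Finset.range p, (-1) * ((p : ℤ) * ((-1) ^ i * ((p - 1).choose i : ℤ))) := by
        refine Finset.sum_congr rfl fun i _ => ?_
        rw [← key i]
        push_cast
        ring
    _ = (-1) * ((p : ℤ) * ∑ i ∈ Finset.range p, (-1) ^ i * ((p - 1).choose i : ℤ)) := by
        rw [Finset.mul_sum, Finset.mul_sum]
    _ = 0 := by rw [h2]; ring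

section
variable [Fintype V] [DecidableEq V] {G : SimpleGraph V} [DecidableRel G.Adj]
variable {d : ℕ} {ℓ : ℕ → ℤ}

lemma countAvoid_Nmk (hℓ0 : ℓ 0 = Fintype.card V)
    (hℓ : ∀ k, 1 ≤ k → k ≤ d → ∀ σ : Finset V, G.IsClique (σ : Set V) → σ.card = k →
      ℓ k = ((lk G σ).card : ℤ))
    {m k : ℕ} (hkm : k ≤ m) (hmd : m ≤ d) {π : Finset V} {u : V}
    (hπ : G.IsClique (π : Set V)) (hπc : π.card = k) (hu : u ∈ lk G π) :
    countAvoid G π u (m - k) = Nmk ℓ m k := by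
  by_cases h1 : k = m
  · rw [Nmk, if_pos h1, h1, Nat.sub_self, countAvoid_zero hπ]
  by_cases h2 : k + 1 = m
  · have hp : m - k = 1 := by omega
    rw [hp, countAvoid_eq hℓ0 hℓ 1 π u hπ hu (by omega) le_rfl, hπc, Nmk, if_neg h1, if_pos h2]
    rw [show m - 1 = k from by omega, ← h2]
    rw [Finset.Ico_self, Finset.prod_empty, one_mul]
    rw [Finset.sum_range_succ, Finset.sum_range_one]
    simp [Nat.choose]
    ring
  · set p := m - k with hpdef
    have hp2 : 2 ≤ p := by omega
    have hkp : k + p = m := by omega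
    rw [countAvoid_eq hℓ0 hℓ p π u hπ hu (by omega) (by omega), hπc, hkp, Nmk, if_neg h1,
      if_neg h2]
    have hIco : Finset.Ico (k + 1) m = Finset.Ioo k m := rfl
    rw [hIco]
    congr 1
    have hsplit : ∑ i ∈ Finset.range (p + 1), (p.choose i : ℤ) * (-1) ^ i * (ℓ (k + i) + i)
        = (∑ i ∈ Finset.range (p + 1), (p.choose i : ℤ) * (-1) ^ i * ℓ (k + i))
          + ∑ i ∈ Finset.range (p + 1), (p.choose i : ℤ) * (-1) ^ i * i := by
      rw [← Finset.sum_add_distrib]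
      refine Finset.sum_congr rfl fun i _ => ?_
      ring
    rw [hsplit, alt_weighted_zero hp2, add_zero]
    refine Finset.sum_nbij' (fun i => k + i) (fun j => j - k) ?_ ?_ ?_ ?_ ?_
    · intro i hi
      simp only [Finset.mem_range] at hi
      simp only [Finset.mem_Icc]
      omega
    · intro j hj
      simp only [Finset.mem_Icc] at hj
      simp only [Finset.mem_range]
      omega
    · intro i hi
      omega
    · intro j hj
      simp only [Finset.mem_Icc] at hj
      omega
    · intro i hi
      rw [show k + i - k = i from by omega]

end

section
variable [Fintype V] [DecidableEq V] {G : SimpleGraph V} [DecidableRel G.Adj]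
variable {d : ℕ} {ℓ : ℕ → ℤ}

lemma card_A {m k : ℕ} (hkm : k ≤ m) {τ : Finset V} (hτ : G.IsClique (τ : Set V))
    (hτc : τ.card = k + 1) {v : V} (hv : v ∈ τ) :
    ((m - k).factorial : ℤ) * (((G.cliqueFinset m).filter
        (fun σ => v ∉ σ ∧ G.neighborFinset v ∩ σ = τ.erase v)).card : ℤ)
      = countAvoid G (τ.erase v) v (m - k) := by
  classical
  set π := τ.erase v with hπdef
  set p := m - k with hpdef
  have hπsub : π ⊆ τ := Finset.erase_subset v τ
  have hπcl : G.IsClique (π : Set V) := hτ.subset (Finset.coe_subset.2 hπsub)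
  have hvπ : v ∉ π := Finset.notMem_erase v τ
  have hπc : π.card = k := by
    rw [hπdef, Finset.card_erase_of_mem hv, hτc]
    omega
  have hπN : ∀ x ∈ π, G.Adj v x := by
    intro x hx
    exact hτ (Finset.mem_coe.2 hv) (Finset.mem_coe.2 (hπsub hx))
      (fun h => hvπ (h ▸ hx))
  set Q : Finset V → Prop := fun R => (∀ x ∈ R, x ∉ π) ∧ G.IsClique ((π : Set V) ∪ (R : Set V))
      ∧ (∀ x ∈ R, ¬(x = v ∨ G.Adj v x)) with hQdef
  set S : Finset (Fin p → V) :=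
    (extT G π p).filter (fun t => ∀ i, ¬(t i = v ∨ G.Adj v (t i))) with hSdef
  set T : Finset (Finset V) := Finset.univ.filter (fun R : Finset V => R.card = p ∧ Q R)
    with hTdef
  have hS : ∀ t, t ∈ S ↔ Function.Injective t ∧ Q (Finset.image t Finset.univ) := by
    intro t
    rw [hSdef, Finset.mem_filter, mem_extT, hQdef]
    simp only [coe_img, Finset.mem_image, Finset.mem_univ, true_and]
    constructor
    · rintro ⟨⟨h1, h2, h3⟩, h4⟩
      refine ⟨h1, ?_, h3, ?_⟩
      · rintro x ⟨i, rfl⟩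
        exact h2 i
      · rintro x ⟨i, rfl⟩
        exact h4 i
    · rintro ⟨h1, h2, h3, h4⟩
      exact ⟨⟨h1, fun i => h2 _ ⟨i, rfl⟩, h3⟩, fun i => h4 _ ⟨i, rfl⟩⟩
  have hT : ∀ R, R ∈ T ↔ R.card = p ∧ Q R := by
    intro R
    rw [hTdef, Finset.mem_filter]
    simp
  have hgen := sum_tuple_eq_factorial_mul p Q S T hS hT (fun _ => (1 : ℤ))
  have hAvoid : countAvoid G π v p = ∑ t ∈ S, (1 : ℤ) := by
    rw [countAvoid, hSdef]
    exact (Finset.sum_filter _ _).symm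
  have hTA : T.card = ((G.cliqueFinset m).filter
      (fun σ => v ∉ σ ∧ G.neighborFinset v ∩ σ = π)).card := by
    refine Finset.card_nbij (fun R => π ∪ R) ?_ ?_ ?_
    · intro R hR
      obtain ⟨hRc, h1, h2, h3⟩ := (hT R).1 hR
      have hdisj : Disjoint π R := Finset.disjoint_right.2 h1
      rw [Finset.mem_coe, Finset.mem_filter]
      refine ⟨SimpleGraph.mem_cliqueFinset_iff.2 (G.isNClique_iff.2 ⟨by
        rw [Finset.coe_union]; exact h2, by
        rw [Finset.card_union_of_disjoint hdisj, hπc]; omega⟩), ?_, ?_⟩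
      · rw [Finset.mem_union]
        rintro (h | h)
        · exact hvπ h
        · exact h3 v h (Or.inl rfl)
      · ext x
        rw [Finset.mem_inter, Finset.mem_union, SimpleGraph.mem_neighborFinset]
        constructor
        · rintro ⟨hadj, hx | hx⟩
          · exact hx
          · exact absurd (Or.inr hadj) (h3 x hx)
        · intro hx
          exact ⟨hπN x hx, Or.inl hx⟩
    · intro R1 hR1 R2 hR2 hee
      have he : π ∪ R1 = π ∪ R2 := hee
      rw [Finset.mem_coe] at hR1 hR2
      obtain ⟨_, h11, _, _⟩ := (hT R1).1 hR1
      obtain ⟨_, h21, _, _⟩ := (hT R2).1 hR2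
      ext x
      constructor
      · intro hx
        have : x ∈ π ∪ R2 := he ▸ Finset.mem_union_right π hx
        rcases Finset.mem_union.1 this with h | h
        · exact absurd h (h11 x hx)
        · exact h
      · intro hx
        have : x ∈ π ∪ R1 := he.symm ▸ Finset.mem_union_right π hx
        rcases Finset.mem_union.1 this with h | h
        · exact absurd h (h21 x hx)
        · exact h
    · intro σ hσ
      rw [Finset.mem_coe, Finset.mem_filter] at hσ
      obtain ⟨hσm, hvσ, hNσ⟩ := hσ
      have hσcl := SimpleGraph.mem_cliqueFinset_iff.1 hσm
      rw [G.isNClique_iff] at hσcl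
      have hπσ : π ⊆ σ := by
        rw [← hNσ]
        exact Finset.inter_subset_right
      refine ⟨σ \ π, ?_, ?_⟩
      · rw [Finset.mem_coe, hT]
        refine ⟨by rw [Finset.card_sdiff_of_subset hπσ, hσcl.2, hπc], ?_, ?_, ?_⟩
        · intro x hx
          exact (Finset.mem_sdiff.1 hx).2
        · rw [← Finset.coe_union, Finset.union_sdiff_of_subset hπσ]
          exact hσcl.1
        · intro x hx
          rintro (rfl | hadj)
          · exact hvσ (Finset.mem_sdiff.1 hx).1
          · refine (Finset.mem_sdiff.1 hx).2 ?_
            rw [← hNσ, Finset.mem_inter, SimpleGraph.mem_neighborFinset]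
            exact ⟨hadj, (Finset.mem_sdiff.1 hx).1⟩
      · exact Finset.union_sdiff_of_subset hπσ
  rw [hAvoid, hgen, Finset.sum_const, nsmul_eq_mul, mul_one, hTA]
end

section
variable [Fintype V] [DecidableEq V] {G : SimpleGraph V} [DecidableRel G.Adj]
variable {d : ℕ} {ℓ : ℕ → ℤ}

lemma oC_hS (q : ℕ) : ∀ t : Fin q → V, t ∈ orderedCliques G q ↔
    Function.Injective t ∧ G.IsClique ((Finset.image t Finset.univ : Finset V) : Set V) := by
  intro t
  rw [mem_oC, coe_img]

lemma oC_hT (q : ℕ) : ∀ σ : Finset V, σ ∈ G.cliqueFinset q ↔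
    σ.card = q ∧ G.IsClique (σ : Set V) := by
  intro σ
  rw [SimpleGraph.mem_cliqueFinset_iff, G.isNClique_iff]
  tauto

lemma gfun_eq_factorial {q : ℕ} (hq : 1 ≤ q) (n : ℕ) :
    gfun G q n = (q.factorial : ℤ) * ∑ σ ∈ G.cliqueFinset q, (aCount G σ n : ℤ) := by
  rw [gfun, if_neg (by omega)]
  exact sum_tuple_eq_factorial_mul q (fun σ => G.IsClique (σ : Set V)) (orderedCliques G q)
    (G.cliqueFinset q) (oC_hS q) (oC_hT q) (fun σ => (aCount G σ n : ℤ))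

lemma card_oC (hℓ0 : ℓ 0 = Fintype.card V)
    (hℓ : ∀ k, 1 ≤ k → k ≤ d → ∀ σ : Finset V, G.IsClique (σ : Set V) → σ.card = k →
      ℓ k = ((lk G σ).card : ℤ)) :
    ∀ q, q ≤ d → ((orderedCliques G q).card : ℤ) = ∏ j ∈ Finset.range q, ℓ j := by
  intro q
  induction q with
  | zero =>
    intro _
    have : orderedCliques G 0 = Finset.univ := by
      ext t
      simp only [mem_oC, Finset.mem_univ, iff_true]
      refine ⟨Function.injective_of_subsingleton t, ?_⟩
      rw [Set.range_eq_empty t]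
      exact SimpleGraph.isClique_empty
    rw [this, Finset.card_univ]
    simp
  | succ q ih =>
    intro hqd
    have h0 : ((orderedCliques G (q + 1)).card : ℤ) = ∑ t ∈ orderedCliques G (q + 1), (1 : ℤ) := by
      simp
    rw [h0, sum_oC_succ (fun _ => (1 : ℤ))]
    have h1 : ∀ s ∈ orderedCliques G q,
        (∑ _v ∈ lk G (Finset.image s Finset.univ), (1 : ℤ)) = ℓ q := by
      intro s hs
      obtain ⟨hinj, hcl⟩ := mem_oC.1 hs
      have hcard : (Finset.image s Finset.univ).card = q := by
        rw [Finset.card_image_of_injective _ hinj, Finset.card_univ, Fintype.card_fin]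
      rw [Finset.sum_const, nsmul_eq_mul, mul_one,
        card_lk_eq hℓ0 hℓ (by rw [coe_img]; exact hcl) (by omega), hcard]
    rw [Finset.sum_congr rfl h1, Finset.sum_const, nsmul_eq_mul, ih (by omega),
      Finset.prod_range_succ]

end

section
variable [Fintype V] [DecidableEq V] {G : SimpleGraph V} [DecidableRel G.Adj]
variable {d : ℕ} {ℓ : ℕ → ℤ}

lemma main_rec (hℓ0 : ℓ 0 = Fintype.card V)
    (hℓ : ∀ k, 1 ≤ k → k ≤ d → ∀ σ : Finset V, G.IsClique (σ : Set V) → σ.card = k →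
      ℓ k = ((lk G σ).card : ℤ))
    {m : ℕ} (h1m : 1 ≤ m) (hmd : m ≤ d) (n : ℕ) :
    gfun G m (n + 1) = ∑ k ∈ Finset.range (m + 1),
      (m.choose k : ℤ) * Nmk ℓ m k * gfun G (k + 1) n := by
  classical
  set A : Finset V → ℤ := fun σ => (aCount G σ n : ℤ) with hA
  set cnt : ℕ → Finset V → ℤ := fun _k τ => ∑ σ ∈ G.cliqueFinset m, ∑ v ∈ σᶜ,
    (if insert v (G.neighborFinset v ∩ σ) = τ then (1 : ℤ) else 0) with hcntdef
  -- Step 1: unfold one automaton step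
  have hrec : gfun G m (n + 1) = (m.factorial : ℤ) * ∑ σ ∈ G.cliqueFinset m, ∑ v ∈ σᶜ,
      A (insert v (G.neighborFinset v ∩ σ)) := by
    rw [gfun, if_neg (by omega)]
    have h1 : ∀ t ∈ orderedCliques G m, ((aCount G (Finset.image t Finset.univ) (n + 1) : ℤ))
        = ∑ v ∈ (Finset.image t Finset.univ)ᶜ,
            A (insert v (G.neighborFinset v ∩ Finset.image t Finset.univ)) := by
      intro t _
      rw [aCount_succ]
      push_cast
      rfl
    rw [Finset.sum_congr rfl h1]
    exact sum_tuple_eq_factorial_mul m (fun σ => G.IsClique (σ : Set V)) (orderedCliques G m)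
      (G.cliqueFinset m) (oC_hS m) (oC_hT m)
      (fun σ => ∑ v ∈ σᶜ, A (insert v (G.neighborFinset v ∩ σ)))
  -- Step 2: expand each new state over all possible target cliques
  have hexp : ∀ σ ∈ G.cliqueFinset m, ∀ v ∈ σᶜ,
      A (insert v (G.neighborFinset v ∩ σ)) = ∑ k ∈ Finset.range (m + 1),
        ∑ τ ∈ G.cliqueFinset (k + 1),
          (if insert v (G.neighborFinset v ∩ σ) = τ then (1 : ℤ) else 0) * A τ := by
    intro σ hσ v hv
    obtain ⟨hσcard, hσcl⟩ := (oC_hT m σ).1 hσ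
    set δ := insert v (G.neighborFinset v ∩ σ) with hδdef
    set k0 := (G.neighborFinset v ∩ σ).card with hk0def
    have hvn : v ∉ G.neighborFinset v ∩ σ := by
      rw [Finset.mem_inter, SimpleGraph.mem_neighborFinset]
      exact fun h => G.irrefl h.1
    have hδm : δ ∈ G.cliqueFinset (k0 + 1) := by
      rw [oC_hT]
      constructor
      · rw [hδdef, Finset.card_insert_of_notMem hvn]
      · rw [hδdef, Finset.coe_insert]
        refine SimpleGraph.IsClique.insert
          (hσcl.subset (Finset.coe_subset.2 Finset.inter_subset_right)) ?_
        intro b hb _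
        rw [Finset.mem_coe, Finset.mem_inter, SimpleGraph.mem_neighborFinset] at hb
        exact hb.1
    have hk0m : k0 ≤ m := by
      rw [hk0def, ← hσcard]
      exact Finset.card_le_card Finset.inter_subset_right
    have hinner : ∀ k, (∑ τ ∈ G.cliqueFinset (k + 1),
        (if δ = τ then (1 : ℤ) else 0) * A τ)
        = if δ ∈ G.cliqueFinset (k + 1) then A δ else 0 := by
      intro k
      have : ∀ τ ∈ G.cliqueFinset (k + 1), (if δ = τ then (1 : ℤ) else 0) * A τ
          = if δ = τ then A τ else 0 := by
        intro τ _
        split <;> simp_all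
      rw [Finset.sum_congr rfl this, Finset.sum_ite_eq]
    rw [Finset.sum_congr rfl (fun k _ => hinner k)]
    rw [Finset.sum_eq_single_of_mem k0 (Finset.mem_range.2 (by omega))]
    · rw [if_pos hδm]
    · intro k _ hk
      rw [if_neg]
      intro hmem
      have h1 := ((oC_hT (k + 1) δ).1 hmem).1
      have h2 := ((oC_hT (k0 + 1) δ).1 hδm).1
      omega
  -- Step 3: rearrange the quadruple sum
  have hre : (∑ σ ∈ G.cliqueFinset m, ∑ v ∈ σᶜ,
      A (insert v (G.neighborFinset v ∩ σ)))
      = ∑ k ∈ Finset.range (m + 1), ∑ τ ∈ G.cliqueFinset (k + 1), cnt k τ * A τ := by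
    rw [Finset.sum_congr rfl (fun σ hσ => Finset.sum_congr rfl (fun v hv => hexp σ hσ v hv))]
    rw [Finset.sum_congr rfl (fun σ _ => Finset.sum_comm)]
    rw [Finset.sum_comm]
    refine Finset.sum_congr rfl fun k _ => ?_
    rw [Finset.sum_congr rfl (fun σ _ => Finset.sum_comm)]
    rw [Finset.sum_comm]
    refine Finset.sum_congr rfl fun τ _ => ?_
    rw [hcntdef]
    simp only [Finset.sum_mul]
  -- Step 4: evaluate the counts
  have hcnt : ∀ k ∈ Finset.range (m + 1), ∀ τ ∈ G.cliqueFinset (k + 1),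
      (m.factorial : ℤ) * cnt k τ
        = (m.choose k : ℤ) * Nmk ℓ m k * (((k + 1).factorial : ℤ)) := by
    intro k hk τ hτ
    rw [Finset.mem_range] at hk
    have hkm : k ≤ m := by omega
    obtain ⟨hτcard, hτcl⟩ := (oC_hT (k + 1) τ).1 hτ
    -- cnt k τ = ∑ v ∈ τ, Aset card
    have hstep : cnt k τ = ∑ v ∈ τ, (((G.cliqueFinset m).filter
        (fun σ => v ∉ σ ∧ G.neighborFinset v ∩ σ = τ.erase v)).card : ℤ) := by
      rw [hcntdef]
      simp only []
      have hcompl : ∀ σ : Finset V, (σᶜ : Finset V) = Finset.univ.filter (fun v => v ∉ σ) := by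
        intro σ
        ext x
        simp
      have h1 : ∀ σ ∈ G.cliqueFinset m, (∑ v ∈ σᶜ,
          (if insert v (G.neighborFinset v ∩ σ) = τ then (1 : ℤ) else 0))
          = ∑ v ∈ Finset.univ, (if v ∉ σ ∧ insert v (G.neighborFinset v ∩ σ) = τ
              then (1 : ℤ) else 0) := by
        intro σ _
        rw [hcompl σ, Finset.sum_filter]
        refine Finset.sum_congr rfl fun v _ => ?_
        by_cases h : v ∉ σ
        · rw [if_pos h]
          by_cases h2 : insert v (G.neighborFinset v ∩ σ) = τ
          · rw [if_pos h2, if_pos ⟨h, h2⟩]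
          · rw [if_neg h2, if_neg (fun hh => h2 hh.2)]
        · rw [if_neg h, if_neg (fun hh => h hh.1)]
      rw [Finset.sum_congr rfl h1, Finset.sum_comm]
      have h2 : ∀ v : V, (∑ σ ∈ G.cliqueFinset m,
          (if v ∉ σ ∧ insert v (G.neighborFinset v ∩ σ) = τ then (1 : ℤ) else 0))
          = if v ∈ τ then (((G.cliqueFinset m).filter
              (fun σ => v ∉ σ ∧ G.neighborFinset v ∩ σ = τ.erase v)).card : ℤ) else 0 := by
        intro v
        by_cases hvτ : v ∈ τ
        · rw [if_pos hvτ]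
          have hiff : ∀ σ : Finset V, (v ∉ σ ∧ insert v (G.neighborFinset v ∩ σ) = τ)
              ↔ (v ∉ σ ∧ G.neighborFinset v ∩ σ = τ.erase v) := by
            intro σ
            have hvn : v ∉ G.neighborFinset v ∩ σ := by
              rw [Finset.mem_inter, SimpleGraph.mem_neighborFinset]
              exact fun h => G.irrefl h.1
            constructor
            · rintro ⟨h1, h2⟩
              refine ⟨h1, ?_⟩
              rw [← h2, Finset.erase_insert hvn]
            · rintro ⟨h1, h2⟩
              refine ⟨h1, ?_⟩
              rw [h2, Finset.insert_erase hvτ]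
          rw [Finset.sum_congr rfl (fun σ _ => by rw [if_congr (hiff σ) rfl rfl])]
          rw [Finset.sum_boole]
        · rw [if_neg hvτ]
          refine Finset.sum_eq_zero fun σ _ => ?_
          rw [if_neg]
          rintro ⟨_, h2⟩
          exact hvτ (h2 ▸ Finset.mem_insert_self v _)
      rw [Finset.sum_congr rfl (fun v _ => h2 v)]
      rw [← Finset.sum_filter, Finset.filter_univ_mem]
    rw [hstep, Finset.mul_sum]
    have hper : ∀ v ∈ τ, (m.factorial : ℤ) * (((G.cliqueFinset m).filter
        (fun σ => v ∉ σ ∧ G.neighborFinset v ∩ σ = τ.erase v)).card : ℤ)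
        = (m.choose k : ℤ) * (k.factorial : ℤ) * Nmk ℓ m k := by
      intro v hv
      have hu : v ∈ lk G (τ.erase v) := by
        refine mem_lk_of (hτcl.subset (Finset.coe_subset.2 (Finset.erase_subset v τ)))
          (Finset.notMem_erase v τ) ?_
        intro u hu
        have huτ : u ∈ τ := Finset.erase_subset v τ hu
        have hne : v ≠ u := fun h => (Finset.notMem_erase v τ) (h ▸ hu)
        exact hτcl (Finset.mem_coe.2 hv) (Finset.mem_coe.2 huτ) hne
      have hNA := countAvoid_Nmk hℓ0 hℓ hkm hmd
        (hτcl.subset (Finset.coe_subset.2 (Finset.erase_subset v τ)))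
        (by rw [Finset.card_erase_of_mem hv, hτcard]; omega) hu
      have hCA := card_A hkm hτcl hτcard hv
      rw [hNA] at hCA
      have hfact : (m.factorial : ℤ) = (m.choose k : ℤ) * (k.factorial : ℤ)
          * ((m - k).factorial : ℤ) := by
        exact_mod_cast (Nat.choose_mul_factorial_mul_factorial hkm).symm
      calc (m.factorial : ℤ) * (((G.cliqueFinset m).filter
            (fun σ => v ∉ σ ∧ G.neighborFinset v ∩ σ = τ.erase v)).card : ℤ)
          = (m.choose k : ℤ) * (k.factorial : ℤ) * (((m - k).factorial : ℤ)
            * (((G.cliqueFinset m).filter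
              (fun σ => v ∉ σ ∧ G.neighborFinset v ∩ σ = τ.erase v)).card : ℤ)) := by
            rw [hfact]
            ring
        _ = (m.choose k : ℤ) * (k.factorial : ℤ) * Nmk ℓ m k := by rw [hCA]
    rw [Finset.sum_congr rfl hper, Finset.sum_const, nsmul_eq_mul, hτcard]
    rw [Nat.factorial_succ]
    push_cast
    ring
  -- Step 5: put everything together
  rw [hrec, hre, Finset.mul_sum]
  refine Finset.sum_congr rfl fun k hk => ?_
  rw [Finset.mul_sum]
  have h5 : ∀ τ ∈ G.cliqueFinset (k + 1), (m.factorial : ℤ) * (cnt k τ * A τ)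
      = ((m.choose k : ℤ) * Nmk ℓ m k * (((k + 1).factorial : ℤ))) * A τ := by
    intro τ hτ
    rw [← mul_assoc, hcnt k hk τ hτ]
  rw [Finset.sum_congr rfl h5, ← Finset.mul_sum, gfun_eq_factorial (by omega) n]
  ring

end

theorem stmt14 [Fintype V] [DecidableEq V] (G : SimpleGraph V) [DecidableRel G.Adj]
    (d : ℕ) (hLR : LinkRegularS G)
    (hmax : ∀ σ : Finset V, G.IsClique (σ : Set V) → σ.card ≤ d)
    (hmax' : ∃ σ : Finset V, G.IsClique (σ : Set V) ∧ σ.card = d)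
    (ℓ : ℕ → ℤ) (hℓ0 : ℓ 0 = Fintype.card V)
    (hℓ : ∀ k, 1 ≤ k → k ≤ d → ∀ σ : Finset V, G.IsClique (σ : Set V) → σ.card = k →
      ℓ k = ((lk G σ).card : ℤ)) :
    (gfun G 0 0 = 1) ∧
    (∀ n, gfun G 0 (n + 1) = gfun G 1 n) ∧
    (∀ m, 1 ≤ m → m ≤ d →
      (gfun G m 0 = ∏ j ∈ Finset.range m, ℓ j) ∧
      (∀ n, gfun G m (n + 1) =
        ∑ k ∈ Finset.range (m + 1), (m.choose k : ℤ) * Nmk ℓ m k * gfun G (k + 1) n)) := by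
  classical
  have hempty : G.IsClique ((∅ : Finset V) : Set V) := by
    rw [Finset.coe_empty]
    exact SimpleGraph.isClique_empty
  refine ⟨?_, ?_, ?_⟩
  · rw [gfun, if_pos rfl, aCount_zero G hempty, Nat.cast_one]
  · intro n
    rw [gfun, if_pos rfl, gfun, if_neg one_ne_zero, aCount_succ]
    push_cast
    have hoc1 : orderedCliques G 1 = Finset.univ := by
      ext t
      simp only [mem_oC, Finset.mem_univ, iff_true]
      refine ⟨Function.injective_of_subsingleton t, ?_⟩
      have : Set.range t = {t 0} := by
        ext x
        simp only [Set.mem_range, Set.mem_singleton_iff]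
        constructor
        · rintro ⟨i, rfl⟩
          rw [Subsingleton.elim i 0]
        · rintro rfl
          exact ⟨0, rfl⟩
      rw [this]
      exact SimpleGraph.isClique_singleton _
    rw [hoc1, show ((∅ : Finset V)ᶜ) = (Finset.univ : Finset V) from by simp]
    refine Fintype.sum_equiv (Equiv.funUnique (Fin 1) V).symm _ _ ?_
    intro v
    have h1 : insert v (G.neighborFinset v ∩ (∅ : Finset V)) = {v} := by simp
    have h2 : Finset.image ((Equiv.funUnique (Fin 1) V).symm v) Finset.univ = {v} := by
      ext x
      simp [Equiv.funUnique, eq_comm]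
    rw [h1, h2]
  · intro m h1m hmd
    refine ⟨?_, fun n => main_rec hℓ0 hℓ h1m hmd n⟩
    rw [gfun, if_neg (by omega)]
    have h1 : ∀ t ∈ orderedCliques G m, ((aCount G (Finset.image t Finset.univ) 0 : ℤ)) = 1 := by
      intro t ht
      rw [aCount_zero G (by rw [coe_img]; exact (mem_oC.1 ht).2), Nat.cast_one]
    rw [Finset.sum_congr rfl h1, Finset.sum_const, nsmul_eq_mul, mul_one,
      card_oC hℓ0 hℓ m hmd]
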